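/- Let D^n, D : ℝ^d → [0,∞) be depth functions with compact starshaped superlevel sets for α > 0, and D nonconstant. Then D^n → D uniformly on ℝ^d if and only if for every α > 0 and every ε > 0 there exists N such that for all n ≥ N and all β ≥ α: D_{β+ε} ⊆ D_β^n ⊆ D_{β−ε}, where D_γ = {z : D(z) ≥ γ} and D_β^n = {z : D^n(z) ≥ β}. -/
import Mathlib


open Filter Metric Set Topology

/-- For depth functions with compact starshaped superlevel sets and `D` nonconstant,
uniform convergence of the depths is equivalent to the sandwich condition on the
trimmed regions. -/
theorem uniform_convergence_iff_region_sandwich {d : ℕ}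
    (Dn : ℕ → EuclideanSpace ℝ (Fin d) → ℝ) (D : EuclideanSpace ℝ (Fin d) → ℝ)
    (hDn_nn : ∀ n z, 0 ≤ Dn n z) (hD_nn : ∀ z, 0 ≤ D z)
    (hDn_usc : ∀ n, UpperSemicontinuous (Dn n)) (hD_usc : UpperSemicontinuous D)
    (hDn_van : ∀ n, Tendsto (Dn n) (cocompact (EuclideanSpace ℝ (Fin d))) (nhds 0))
    (hD_van : Tendsto D (cocompact (EuclideanSpace ℝ (Fin d))) (nhds 0))
    (hDn_star : ∀ n, ∀ α : ℝ, 0 < α → {z | α ≤ Dn n z}.Nonempty →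
      ∃ x ∈ {z | α ≤ Dn n z}, StarConvex ℝ x {z | α ≤ Dn n z})
    (hD_star : ∀ α : ℝ, 0 < α → {z | α ≤ D z}.Nonempty →
      ∃ x ∈ {z | α ≤ D z}, StarConvex ℝ x {z | α ≤ D z})
    (hpos : ∃ x, 0 < D x) :
    TendstoUniformly (fun n => Dn n) D atTop
      ↔ (∀ α : ℝ, 0 < α → ∀ ε : ℝ, 0 < ε → ∃ N, ∀ n ≥ N, ∀ β : ℝ, α ≤ β →
          {z | β + ε ≤ D z} ⊆ {z | β ≤ Dn n z} ∧
          {z | β ≤ Dn n z} ⊆ {z | β - ε ≤ D z}) := by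
  constructor
  · intro h α hα ε hε
    have h' := Metric.tendstoUniformly_iff.mp h ε hε
    rw [eventually_atTop] at h'
    obtain ⟨N, hN⟩ := h'
    refine ⟨N, fun n hn β hβ => ⟨fun z hz => ?_, fun z hz => ?_⟩⟩
    · have hd := hN n hn z
      rw [Real.dist_eq, abs_sub_lt_iff] at hd
      simp only [mem_setOf_eq] at hz ⊢
      linarith [hd.1]
    · have hd := hN n hn z
      rw [Real.dist_eq, abs_sub_lt_iff] at hd
      simp only [mem_setOf_eq] at hz ⊢
      linarith [hd.2]
  · intro h
    rw [Metric.tendstoUniformly_iff]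
    intro ε hε
    obtain ⟨N, hN⟩ := h (ε/3) (by linarith) (ε/3) (by linarith)
    rw [eventually_atTop]
    refine ⟨N, fun n hn z => ?_⟩
    have hupper : Dn n z < D z + ε/2 := by
      by_contra hc
      push_neg at hc
      have h2 := (hN n hn (D z + ε/2) (by have := hD_nn z; linarith)).2
      have hz : z ∈ {w | D z + ε/2 ≤ Dn n w} := hc
      have := h2 hz
      simp only [mem_setOf_eq] at this
      linarith
    have hlower : D z - Dn n z < 2*ε/3 := by
      by_cases hcase : D z ≥ 2*ε/3
      · have h1 := (hN n hn (D z - ε/3) (by linarith)).1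
        have hz : z ∈ {w | (D z - ε/3) + ε/3 ≤ D w} := by
          simp only [mem_setOf_eq]; linarith
        have := h1 hz
        simp only [mem_setOf_eq] at this
        linarith
      · push_neg at hcase
        have := hDn_nn n z
        linarith
    rw [Real.dist_eq, abs_sub_lt_iff]
    constructor <;> linarith
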